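/- Let K be a field, V a finite-dimensional K-vector space, N : V → V a nilpotent K-linear endomorphism, and (M_j)_{j∈ℤ} a monodromy filtration for N. Then for every integer j ≤ -1 one has N(M_{j+2}) = M_j. -/

import Mathlib

/-- A monodromy filtration for a nilpotent endomorphism `N` of a vector space `V`:
an increasing, exhaustive and separated filtration `M` indexed by `ℤ` with
`N (M j) ⊆ M (j - 2)`, such that for every `j ≥ 1` the map induced by `N ^ j` gives an
isomorphism `M j / M (j-1) ≅ M (-j) / M (-j-1)`. -/
def IsMonodromyFiltration {K V : Type*} [Field K] [AddCommGroup V] [Module K V]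
    (N : V →ₗ[K] V) (M : ℤ → Submodule K V) : Prop :=
  (∀ j : ℤ, M j ≤ M (j + 1)) ∧
  (∃ a : ℤ, ∀ j : ℤ, j ≤ a → M j = ⊥) ∧
  (∃ b : ℤ, ∀ j : ℤ, b ≤ j → M j = ⊤) ∧
  (∀ j : ℤ, (M j).map N ≤ M (j - 2)) ∧
  (∀ j : ℕ, 1 ≤ j →
    (∀ x : V, x ∈ M (j : ℤ) → (N ^ j) x ∈ M (-(j : ℤ))) ∧
    (∀ x : V, x ∈ M (j : ℤ) → (N ^ j) x ∈ M (-(j : ℤ) - 1) → x ∈ M ((j : ℤ) - 1)) ∧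
    (∀ y : V, y ∈ M (-(j : ℤ)) → ∃ x ∈ M (j : ℤ), (N ^ j) x - y ∈ M (-(j : ℤ) - 1)))

/-- For a monodromy filtration of a nilpotent endomorphism, `N (M (j+2)) = M j` for all
`j ≤ -1` (Deligne). -/
theorem monodromyFiltration_map_eq {K V : Type*} [Field K] [AddCommGroup V] [Module K V]
    [FiniteDimensional K V] (N : V →ₗ[K] V) (hN : IsNilpotent N)
    (M : ℤ → Submodule K V) (hM : IsMonodromyFiltration N M) :
    ∀ j : ℤ, j ≤ -1 → (M (j + 2)).map N = M j := by
  obtain ⟨hmono, ⟨a, ha⟩, _, hmap, hiso⟩ := hM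
  -- monotonicity
  have hmono' : ∀ i j : ℤ, i ≤ j → M i ≤ M j := by
    intro i j hij
    exact Int.le_induction (motive := fun j _ => M i ≤ M j) le_rfl (fun k _ ih => ih.trans (hmono k)) j hij
  -- iterated map property
  have hpow : ∀ (m : ℕ) (i : ℤ) (x : V), x ∈ M i → (N ^ m) x ∈ M (i - 2 * m) := by
    intro m
    induction m with
    | zero => intro i x hx; simpa using hx
    | succ m ih =>
      intro i x hx
      have h1 : (N ^ m) x ∈ M (i - 2 * m) := ih i x hx
      have h2 : N ((N ^ m) x) ∈ M (i - 2 * m - 2) :=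
        hmap _ ⟨_, h1, rfl⟩
      have : (N ^ (m + 1)) x = N ((N ^ m) x) := by
        rw [pow_succ', Module.End.mul_apply]
      rw [this]
      have he : i - 2 * m - 2 = i - 2 * (m + 1 : ℕ) := by push_cast; ring
      rwa [he] at h2
  -- key claim: M j ≤ N(M(j+2)) ⊔ M (j-1) for j ≤ -1
  have key : ∀ j : ℤ, j ≤ -1 → M j ≤ (M (j + 2)).map N ⊔ M (j - 1) := by
    intro j hj y hy
    set k : ℕ := (-j).toNat with hk
    have hk1 : 1 ≤ k := by omega
    have hkj : (k : ℤ) = -j := by omega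
    obtain ⟨_, _, hsurj⟩ := hiso k hk1
    have hy' : y ∈ M (-(k : ℤ)) := by rw [hkj, neg_neg]; exact hy
    obtain ⟨x, hx, hd⟩ := hsurj y hy'
    have hx' : (N ^ (k - 1)) x ∈ M ((k : ℤ) - 2 * (k - 1 : ℕ)) := hpow (k - 1) _ x hx
    have he : ((k : ℤ)) - 2 * ((k - 1 : ℕ) : ℤ) = j + 2 := by
      have : ((k - 1 : ℕ) : ℤ) = (k : ℤ) - 1 := by omega
      rw [this]; omega
    rw [he] at hx'
    have hNx : (N ^ k) x = N ((N ^ (k - 1)) x) := by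
      conv_lhs => rw [show k = (k - 1) + 1 by omega]
      rw [pow_succ', Module.End.mul_apply]
    have h1 : (N ^ k) x ∈ (M (j + 2)).map N := by
      rw [hNx]; exact ⟨_, hx', rfl⟩
    have h2 : (N ^ k) x - y ∈ M (j - 1) := by
      have : -(k : ℤ) - 1 = j - 1 := by omega
      rwa [this] at hd
    have : y = (N ^ k) x - ((N ^ k) x - y) := (sub_sub_cancel _ _).symm
    rw [this]
    exact Submodule.sub_mem _ (Submodule.mem_sup_left h1) (Submodule.mem_sup_right h2)
  -- by induction, M j ≤ N(M(j+2)) for all j ≤ -1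
  have main : ∀ (n : ℕ) (j : ℤ), j ≤ -1 → j ≤ a + n → M j ≤ (M (j + 2)).map N := by
    intro n
    induction n with
    | zero =>
      intro j hj hja
      rw [ha j (by omega)]
      exact bot_le
    | succ n ih =>
      intro j hj hja
      by_cases hja' : j ≤ a + n
      · exact ih j hj hja'
      · have step := key j hj
        have h2 : M (j - 1) ≤ (M (j + 1)).map N := by
          have h := ih (j - 1) (by omega) (by omega)
          have e : j - 1 + 2 = j + 1 := by ring
          rwa [e] at h
        have h3 : (M (j + 1)).map N ≤ (M (j + 2)).map N :=
          Submodule.map_mono (hmono' _ _ (by omega))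
        exact step.trans (sup_le le_rfl (h2.trans h3))
  intro j hj
  apply le_antisymm
  · have := hmap (j + 2)
    simpa using this
  · exact main (j - a).toNat j hj (by omega)
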